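/- Let c > 0 and G(x_1,x_2) = (x_2(c+x_1)^2 + c x_1)/(c(c+x_1) − x_2(c+x_1)^2), defined for x_1 ≥ 0 and 0 ≤ x_2 < c/(c+x_1). For every ε ∈ (0,1), along the curve x_1 = t, x_2 = εc/(c+t), the function G(t, εc/(c+t)) stays bounded as t → +∞ (in fact it converges to a finite limit); hence G does not tend to +∞ at the boundary of the domain. -/

import Mathlib

open Filter

/-- For `F(x) = c/(c+x)`, `c > 0`, the function
`G(x₁,x₂) = (x₂(c+x₁)² + cx₁)/(c(c+x₁) - x₂(c+x₁)²)` stays bounded (in fact converges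
to a finite limit) along the curve `x₁ = t`, `x₂ = εc/(c+t)` as `t → +∞`, for every
`ε ∈ (0,1)`; hence it does not tend to `+∞` at the boundary. -/
theorem stmt_8 (c : ℝ) (hc : 0 < c) (G : ℝ → ℝ → ℝ)
    (hG : ∀ x1 x2, G x1 x2 =
      (x2 * (c + x1) ^ 2 + c * x1) / (c * (c + x1) - x2 * (c + x1) ^ 2)) :
    ∀ ε : ℝ, 0 < ε → ε < 1 →
      (∃ L : ℝ, Tendsto (fun t => G t (ε * c / (c + t))) atTop (nhds L)) ∧
      ¬ Tendsto (fun t => G t (ε * c / (c + t))) atTop atTop := by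
  intro ε hε hε1
  have h1ε : (0:ℝ) < 1 - ε := by linarith
  have hlim : Tendsto (fun t => G t (ε * c / (c + t))) atTop
      (nhds ((1 + ε) / (1 - ε))) := by
    have heq : (fun t : ℝ => G t (ε * c / (c + t))) =ᶠ[atTop]
        (fun t => ((1 + ε) + ε * c / t) / ((1 - ε) + (1 - ε) * c / t)) := by
      filter_upwards [eventually_gt_atTop 0] with t ht
      have hct : (0:ℝ) < c + t := by linarith
      rw [hG]
      have hD : c * (c + t) - ε * c / (c + t) * (c + t) ^ 2 = (1 - ε) * c * (c + t) := by
        field_simp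
      have hN : ε * c / (c + t) * (c + t) ^ 2 + c * t = c * (ε * c + (1 + ε) * t) := by
        field_simp; ring
      rw [hD, hN]
      rw [div_eq_div_iff (by positivity)
        (by positivity)]
      field_simp
      ring
    refine Tendsto.congr' heq.symm ?_
    have hz : Tendsto (fun t : ℝ => ε * c / t) atTop (nhds 0) := by
      simpa [div_eq_mul_inv] using tendsto_inv_atTop_zero.const_mul (ε * c)
    have hz2 : Tendsto (fun t : ℝ => (1 - ε) * c / t) atTop (nhds 0) := by
      simpa [div_eq_mul_inv] using tendsto_inv_atTop_zero.const_mul ((1 - ε) * c)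
    have h1 : Tendsto (fun t : ℝ => (1 + ε) + ε * c / t) atTop (nhds ((1 + ε) + 0)) :=
      tendsto_const_nhds.add hz
    have h2 : Tendsto (fun t : ℝ => (1 - ε) + (1 - ε) * c / t) atTop (nhds ((1 - ε) + 0)) :=
      tendsto_const_nhds.add hz2
    have := h1.div h2 (by simpa using h1ε.ne')
    simpa [Pi.div_def] using this
  refine ⟨⟨_, hlim⟩, not_tendsto_atTop_of_tendsto_nhds hlim⟩
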